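/- Let (𝒰₁,𝒱₁),(𝒰₂,𝒱₂) be a twin cotorsion pair on an exact category 𝓑 with enough projectives and injectives (i.e., 𝒰₁ ⊆ 𝒰₂), 𝒲_t = 𝒱₁ ∩ 𝒰₂, and 𝓗_t the heart of the twin cotorsion pair. For a morphism f : A → B with A, B ∈ 𝓗_t, the image H₂(f) is zero in 𝓗₂/𝒲₂ if and only if f factors through an object of 𝒲_t. Consequently the induced functor β₂ : 𝓗_t/𝒲_t → 𝓗₂/𝒲₂ is faithful. -/

import Mathlib

open CategoryTheory Limits ZeroObject

universe v u

variable (C : Type u) [Category.{v} C] [Preadditive C] [HasZeroObject C]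
  [HasBinaryBiproducts C]

/-- An exact structure (in the sense of Quillen) on an additive category,
given by a class of short exact sequences (conflations). -/
structure ExactStructure : Type (max u (v + 1)) where
  /-- the class of short exact sequences -/
  IsSES : ∀ {A B X : C}, (A ⟶ B) → (B ⟶ X) → Prop
  comp_zero : ∀ {A B X : C} {f : A ⟶ B} {g : B ⟶ X}, IsSES f g → f ≫ g = 0
  isKernel : ∀ {A B X : C} {f : A ⟶ B} {g : B ⟶ X} (h : IsSES f g),
      Nonempty (IsLimit (KernelFork.ofι f (comp_zero h)))
  isCokernel : ∀ {A B X : C} {f : A ⟶ B} {g : B ⟶ X} (h : IsSES f g),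
      Nonempty (IsColimit (CokernelCofork.ofπ g (comp_zero h)))
  ses_iso_congr : ∀ {A B X A' B' X' : C} {f : A ⟶ B} {g : B ⟶ X}
      (eA : A' ≅ A) (eB : B ≅ B') (eX : X ≅ X'), IsSES f g →
      IsSES (eA.hom ≫ f ≫ eB.hom) (eB.inv ≫ g ≫ eX.hom)
  id_ses : ∀ A : C, IsSES (𝟙 A) (0 : A ⟶ 0)
  id_ses' : ∀ A : C, IsSES (0 : (0 : C) ⟶ A) (𝟙 A)
  infl_comp : ∀ {A B X : C} (f : A ⟶ B) (f' : B ⟶ X),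
      (∃ (Z : C) (g : B ⟶ Z), IsSES f g) → (∃ (Z : C) (g : X ⟶ Z), IsSES f' g) →
      ∃ (Z : C) (g : X ⟶ Z), IsSES (f ≫ f') g
  defl_comp : ∀ {A B X : C} (g : A ⟶ B) (g' : B ⟶ X),
      (∃ (Z : C) (f : Z ⟶ A), IsSES f g) → (∃ (Z : C) (f : Z ⟶ B), IsSES f g') →
      ∃ (Z : C) (f : Z ⟶ A), IsSES f (g ≫ g')
  pushout_infl : ∀ {A B A' : C} (f : A ⟶ B) (a : A ⟶ A'),
      (∃ (Z : C) (g : B ⟶ Z), IsSES f g) →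
      ∃ (P : C) (f' : A' ⟶ P) (b : B ⟶ P), IsPushout a f f' b ∧
        ∃ (Z : C) (g : P ⟶ Z), IsSES f' g
  pullback_defl : ∀ {B X X' : C} (g : B ⟶ X) (x : X' ⟶ X),
      (∃ (Z : C) (f : Z ⟶ B), IsSES f g) →
      ∃ (P : C) (g' : P ⟶ X') (b : P ⟶ B), IsPullback g' b x g ∧
        ∃ (Z : C) (f : Z ⟶ P), IsSES f g'

variable {C}

namespace ExactStructure

variable (E : ExactStructure C)

/-- inflations (admissible monomorphisms) -/
def Infl {A B : C} (f : A ⟶ B) : Prop := ∃ (X : C) (g : B ⟶ X), E.IsSES f g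

/-- deflations (admissible epimorphisms) -/
def Defl {B X : C} (g : B ⟶ X) : Prop := ∃ (A : C) (f : A ⟶ B), E.IsSES f g

/-- projective objects relative to the exact structure -/
def Proj (P : C) : Prop :=
  ∀ ⦃B X : C⦄ (g : B ⟶ X), E.Defl g → ∀ h : P ⟶ X, ∃ l : P ⟶ B, l ≫ g = h

/-- injective objects relative to the exact structure -/
def Inj (I : C) : Prop :=
  ∀ ⦃A B : C⦄ (f : A ⟶ B), E.Infl f → ∀ h : A ⟶ I, ∃ l : B ⟶ I, f ≫ l = h

/-- the exact category has enough projectives -/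
def EnoughProj : Prop :=
  ∀ X : C, ∃ (P K : C) (i : K ⟶ P) (p : P ⟶ X), E.Proj P ∧ E.IsSES i p

/-- the exact category has enough injectives -/
def EnoughInj : Prop :=
  ∀ X : C, ∃ (I Z : C) (i : X ⟶ I) (p : I ⟶ Z), E.Inj I ∧ E.IsSES i p

end ExactStructure

/-- a morphism factors through an object of a given class of objects -/
def FactorsThru (S : Set C) {X Y : C} (f : X ⟶ Y) : Prop :=
  ∃ (W : C) (a : X ⟶ W) (b : W ⟶ Y), W ∈ S ∧ a ≫ b = f

/-- A cotorsion pair `(𝒰, 𝒱)` on the exact category `(C, E)`. -/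
structure CotorsionPair (E : ExactStructure C) where
  U : Set C
  V : Set C
  U_summand : ∀ ⦃X Z : C⦄, Z ∈ U → (∃ (i : X ⟶ Z) (r : Z ⟶ X), i ≫ r = 𝟙 X) → X ∈ U
  V_summand : ∀ ⦃X Z : C⦄, Z ∈ V → (∃ (i : X ⟶ Z) (r : Z ⟶ X), i ≫ r = 𝟙 X) → X ∈ V
  U_add : ∀ ⦃X Y : C⦄, X ∈ U → Y ∈ U → (X ⊞ Y) ∈ U
  V_add : ∀ ⦃X Y : C⦄, X ∈ V → Y ∈ V → (X ⊞ Y) ∈ V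
  ext_vanish : ∀ ⦃A B X : C⦄ {f : A ⟶ B} {g : B ⟶ X}, E.IsSES f g → X ∈ U → A ∈ V →
      ∃ r : B ⟶ A, f ≫ r = 𝟙 A
  res : ∀ B : C, ∃ (VB UB : C) (i : VB ⟶ UB) (p : UB ⟶ B),
      VB ∈ V ∧ UB ∈ U ∧ E.IsSES i p
  cores : ∀ B : C, ∃ (VB UB : C) (i : B ⟶ VB) (p : VB ⟶ UB),
      VB ∈ V ∧ UB ∈ U ∧ E.IsSES i p

namespace CotorsionPair

variable {E : ExactStructure C} (CP : CotorsionPair E)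

/-- `𝒲 = 𝒰 ∩ 𝒱` -/
def W : Set C := CP.U ∩ CP.V

/-- `𝓑⁺`: objects admitting a short exact sequence `V ↣ W ↠ B` with `V ∈ 𝒱`, `W ∈ 𝒲`. -/
def Bplus : Set C :=
  {B | ∃ (V₀ W₀ : C) (i : V₀ ⟶ W₀) (p : W₀ ⟶ B), V₀ ∈ CP.V ∧ W₀ ∈ CP.W ∧ E.IsSES i p}

/-- `𝓑⁻`: objects admitting a short exact sequence `B ↣ W ↠ U` with `W ∈ 𝒲`, `U ∈ 𝒰`. -/
def Bminus : Set C :=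
  {B | ∃ (W₀ U₀ : C) (i : B ⟶ W₀) (p : W₀ ⟶ U₀), W₀ ∈ CP.W ∧ U₀ ∈ CP.U ∧ E.IsSES i p}

/-- the heart subcategory `𝓗 = 𝓑⁺ ∩ 𝓑⁻` -/
def Heart : Set C := CP.Bplus ∩ CP.Bminus

/-- the ideal relation defining the additive quotient `𝓑/𝒲` -/
def wRel : HomRel C := fun {X Y} f g =>
  ∃ (W : C) (a : X ⟶ W) (b : W ⟶ Y), W ∈ CP.W ∧ a ≫ b = f - g

/-- the quotient category `𝓑/𝒲` -/
abbrev QW := CategoryTheory.Quotient CP.wRel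

/-- the quotient functor `π : 𝓑 → 𝓑/𝒲` -/
abbrev qf : C ⥤ CP.QW := Quotient.functor _

/-- `𝓑⁺/𝒲` as a full subcategory of `𝓑/𝒲` -/
abbrev BplusCat := ObjectProperty.FullSubcategory (fun X : CP.QW => X.as ∈ CP.Bplus)

/-- `𝓑⁻/𝒲` as a full subcategory of `𝓑/𝒲` -/
abbrev BminusCat := ObjectProperty.FullSubcategory (fun X : CP.QW => X.as ∈ CP.Bminus)

/-- the heart `𝓗/𝒲` as a full subcategory of `𝓑/𝒲` -/
abbrev HeartCat := ObjectProperty.FullSubcategory (fun X : CP.QW => X.as ∈ CP.Heart)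

/-- the inclusion `𝓑⁺/𝒲 ↪ 𝓑/𝒲` -/
abbrev inclPlus : CP.BplusCat ⥤ CP.QW := ObjectProperty.ι _

/-- the inclusion `𝓑⁻/𝒲 ↪ 𝓑/𝒲` -/
abbrev inclMinus : CP.BminusCat ⥤ CP.QW := ObjectProperty.ι _

/-- the inclusion `𝓗/𝒲 ↪ 𝓑/𝒲` -/
abbrev inclHeart : CP.HeartCat ⥤ CP.QW := ObjectProperty.ι _

/-- `add(𝒰 ∗ 𝒱)`: objects `X` admitting a short exact sequence `U ↣ X ⊕ Y ↠ V`
with `U ∈ 𝒰`, `V ∈ 𝒱`. -/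
def addUV : Set C :=
  {X | ∃ (Y U₀ V₀ : C) (i : U₀ ⟶ X ⊞ Y) (p : X ⊞ Y ⟶ V₀),
    U₀ ∈ CP.U ∧ V₀ ∈ CP.V ∧ E.IsSES i p}

end CotorsionPair


variable (E : ExactStructure C)

/-- `𝒲_t = 𝒱₁ ∩ 𝒰₂` for a twin cotorsion pair -/
def Wt (CP₁ CP₂ : CotorsionPair E) : Set C := CP₁.V ∩ CP₂.U

/-- `𝓑_t⁺` for a twin cotorsion pair -/
def Btplus (CP₁ CP₂ : CotorsionPair E) : Set C :=
  {B | ∃ (V₀ W₀ : C) (i : V₀ ⟶ W₀) (p : W₀ ⟶ B),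
    V₀ ∈ CP₂.V ∧ W₀ ∈ Wt E CP₁ CP₂ ∧ E.IsSES i p}

/-- `𝓑_t⁻` for a twin cotorsion pair -/
def Btminus (CP₁ CP₂ : CotorsionPair E) : Set C :=
  {B | ∃ (W₀ U₀ : C) (i : B ⟶ W₀) (p : W₀ ⟶ U₀),
    W₀ ∈ Wt E CP₁ CP₂ ∧ U₀ ∈ CP₁.U ∧ E.IsSES i p}

/-- the heart `𝓗_t` of a twin cotorsion pair -/
def Ht (CP₁ CP₂ : CotorsionPair E) : Set C := Btplus E CP₁ CP₂ ∩ Btminus E CP₁ CP₂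

variable {E}

/-- the ideal relation defining `𝓑/𝒲_t` -/
def wtRel (CP₁ CP₂ : CotorsionPair E) : HomRel C := fun {X Y} f g =>
  FactorsThru (Wt E CP₁ CP₂) (f - g)

/-- the heart `𝓗_t/𝒲_t` of the twin cotorsion pair -/
abbrev HtCat (CP₁ CP₂ : CotorsionPair E) :=
  ObjectProperty.FullSubcategory (fun X : CategoryTheory.Quotient (wtRel CP₁ CP₂) => X.as ∈ Ht E CP₁ CP₂)

/-- the functor `β₂ : 𝓗_t/𝒲_t → 𝓗₂/𝒲₂` induced by `H₂` -/
def beta2 (CP₁ CP₂ : CotorsionPair E) (H₂ : C ⥤ CP₂.HeartCat)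
    (hresp : ∀ (x y : C) (f g : x ⟶ y), wtRel CP₁ CP₂ f g → H₂.map f = H₂.map g) :
    HtCat CP₁ CP₂ ⥤ CP₂.HeartCat :=
  ObjectProperty.ι _ ⋙ CategoryTheory.Quotient.lift (wtRel CP₁ CP₂) H₂ hresp


/-! ### Auxiliary lemmas -/

set_option linter.unusedVariables false
set_option linter.unusedSectionVars false

section AuxLemmas

variable {E : ExactStructure C}

namespace ExactStructure

variable (E)

lemma ses_mono {A B X : C} {f : A ⟶ B} {g : B ⟶ X} (h : E.IsSES f g) : Mono f := by
  obtain ⟨hk⟩ := E.isKernel h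
  constructor
  intro T u v huv
  exact Fork.IsLimit.hom_ext hk (by simpa using huv)

lemma ses_epi {A B X : C} {f : A ⟶ B} {g : B ⟶ X} (h : E.IsSES f g) : Epi g := by
  obtain ⟨hc⟩ := E.isCokernel h
  constructor
  intro T u v huv
  exact Cofork.IsColimit.hom_ext hc (by simpa using huv)

lemma ses_lift {A B X : C} {f : A ⟶ B} {g : B ⟶ X} (h : E.IsSES f g)
    {T : C} (m : T ⟶ B) (hm : m ≫ g = 0) : ∃ l : T ⟶ A, l ≫ f = m := by
  obtain ⟨hk⟩ := E.isKernel h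
  obtain ⟨l, hl⟩ := KernelFork.IsLimit.lift' hk m hm
  exact ⟨l, by simpa using hl⟩

lemma ses_desc {A B X : C} {f : A ⟶ B} {g : B ⟶ X} (h : E.IsSES f g)
    {T : C} (t : B ⟶ T) (ht : f ≫ t = 0) : ∃ l : X ⟶ T, g ≫ l = t := by
  obtain ⟨hc⟩ := E.isCokernel h
  obtain ⟨l, hl⟩ := CokernelCofork.IsColimit.desc' hc t ht
  exact ⟨l, by simpa using hl⟩

/-- a retraction of the inflation yields a section of the deflation -/
lemma ses_section {A B X : C} {f : A ⟶ B} {g : B ⟶ X} (h : E.IsSES f g)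
    (r : B ⟶ A) (hr : f ≫ r = 𝟙 A) : ∃ s : X ⟶ B, s ≫ g = 𝟙 X := by
  obtain ⟨l, hl⟩ := E.ses_desc h (𝟙 B - r ≫ f)
    (by simp [Preadditive.comp_sub, ← Category.assoc, hr])
  refine ⟨l, ?_⟩
  haveI := E.ses_epi h
  rw [← cancel_epi g, ← Category.assoc, hl]
  simp [Preadditive.sub_comp, Category.assoc, E.comp_zero h]

/-- replace the cokernel part of a short exact sequence by another cokernel -/
lemma ses_coker_congr {A B X X₂ : C} {f : A ⟶ B} {g : B ⟶ X} (h : E.IsSES f g)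
    (g₂ : B ⟶ X₂) (hz : f ≫ g₂ = 0) (hepi : Epi g₂)
    (hdesc : ∀ {T : C} (t : B ⟶ T), f ≫ t = 0 → ∃ τ : X₂ ⟶ T, g₂ ≫ τ = t) :
    E.IsSES f g₂ := by
  obtain ⟨ι, hι⟩ := E.ses_desc h g₂ hz
  obtain ⟨ι', hι'⟩ := hdesc g (E.comp_zero h)
  have h1 : ι' ≫ ι = 𝟙 X₂ := by
    haveI := hepi
    rw [← cancel_epi g₂, ← Category.assoc, hι', hι, Category.comp_id]
  have h2 : ι ≫ ι' = 𝟙 X := by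
    haveI := E.ses_epi h
    rw [← cancel_epi g, ← Category.assoc, hι, hι', Category.comp_id]
  have := E.ses_iso_congr (Iso.refl A) (Iso.refl B) (⟨ι, ι', h2, h1⟩ : X ≅ X₂) h
  simpa [hι] using this

/-- the kernel of a pulled-back deflation -/
lemma ses_pullback {A B X X' P : C} {f : A ⟶ B} {g : B ⟶ X} (h : E.IsSES f g)
    {g' : P ⟶ X'} {b : P ⟶ B} {x : X' ⟶ X}
    (sq : IsPullback g' b x g) (hg' : ∃ (Z : C) (f₀ : Z ⟶ P), E.IsSES f₀ g') :
    ∃ ft : A ⟶ P, E.IsSES ft g' ∧ ft ≫ b = f := by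
  obtain ⟨Z, f₀, hf₀⟩ := hg'
  haveI hm := E.ses_mono h
  haveI hm₀ := E.ses_mono hf₀
  obtain ⟨w, hw⟩ := E.ses_lift h (f₀ ≫ b)
    (by rw [Category.assoc, ← sq.w, ← Category.assoc, E.comp_zero hf₀, zero_comp])
  have hcomm : (0 : A ⟶ X') ≫ x = f ≫ g := by rw [zero_comp, E.comp_zero h]
  set vt : A ⟶ P := sq.lift 0 f hcomm with hvtdef
  have hvt : vt ≫ g' = 0 := sq.lift_fst _ _ _
  have hvtb : vt ≫ b = f := sq.lift_snd _ _ _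
  obtain ⟨w', hw'⟩ := E.ses_lift hf₀ vt hvt
  have e1 : w' ≫ f₀ ≫ b = f := by rw [← Category.assoc, hw', hvtb]
  have hww' : w' ≫ w = 𝟙 A := by
    rw [← cancel_mono f, Category.id_comp, Category.assoc, hw, e1]
  have hw'w : w ≫ w' = 𝟙 Z := by
    rw [← cancel_mono f₀, Category.id_comp]
    apply sq.hom_ext
    · simp [E.comp_zero hf₀]
    · rw [Category.assoc, Category.assoc, e1, hw]
  have := E.ses_iso_congr (⟨w', w, hww', hw'w⟩ : A ≅ Z) (Iso.refl P) (Iso.refl X') hf₀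
  refine ⟨w' ≫ f₀, by simpa using this, ?_⟩
  rw [Category.assoc, e1]

end ExactStructure

end AuxLemmas


section AuxLemmas2

variable {E : ExactStructure C}

namespace CotorsionPair

lemma zero_mem_U (CP : CotorsionPair E) : (0 : C) ∈ CP.U := by
  obtain ⟨VB, UB, i, p, hV, hU, _⟩ := CP.res (0 : C)
  exact CP.U_summand hU ⟨0, 0, (isZero_zero C).eq_of_src _ _⟩

lemma zero_mem_V (CP : CotorsionPair E) : (0 : C) ∈ CP.V := by
  obtain ⟨VB, UB, i, p, hV, hU, _⟩ := CP.cores (0 : C)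
  exact CP.V_summand hV ⟨0, 0, (isZero_zero C).eq_of_src _ _⟩

lemma zero_mem_W (CP : CotorsionPair E) : (0 : C) ∈ CP.W :=
  ⟨CP.zero_mem_U, CP.zero_mem_V⟩

lemma biprod_mem_W (CP : CotorsionPair E) {X Y : C} (hX : X ∈ CP.W) (hY : Y ∈ CP.W) :
    (X ⊞ Y) ∈ CP.W :=
  ⟨CP.U_add hX.1 hY.1, CP.V_add hX.2 hY.2⟩

instance wRel_congruence (CP : CotorsionPair E) : Congruence CP.wRel where
  equivalence :=
    { refl := fun f => ⟨0, 0, 0, CP.zero_mem_W, by simp⟩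
      symm := by
        rintro f g ⟨W, a, b, hW, hab⟩
        exact ⟨W, -a, b, hW, by rw [Preadditive.neg_comp, hab, neg_sub]⟩
      trans := by
        rintro f g h ⟨W₁, a₁, b₁, hW₁, h₁⟩ ⟨W₂, a₂, b₂, hW₂, h₂⟩
        refine ⟨W₁ ⊞ W₂, biprod.lift a₁ a₂, biprod.desc b₁ b₂,
          CP.biprod_mem_W hW₁ hW₂, ?_⟩
        rw [biprod.lift_desc, h₁, h₂]
        abel }
  comp_left := by
    rintro X Y Z fc g g' ⟨W, a, b, hW, hab⟩
    exact ⟨W, fc ≫ a, b, hW, by rw [Category.assoc, hab, Preadditive.comp_sub]⟩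
  comp_right := by
    rintro X Y Z f f' gc ⟨W, a, b, hW, hab⟩
    exact ⟨W, a, b ≫ gc, hW, by rw [← Category.assoc, hab, Preadditive.sub_comp]⟩

/-- `CP.U` is closed under extensions -/
lemma mem_U_of_ext (CP : CotorsionPair E) {A X B : C} {i : A ⟶ X} {p : X ⟶ B}
    (hses : E.IsSES i p) (hA : A ∈ CP.U) (hB : B ∈ CP.U) : X ∈ CP.U := by
  haveI himono := E.ses_mono hses
  haveI hpepi := E.ses_epi hses
  obtain ⟨VX, UX, v, d, hVX, hUX, hres⟩ := CP.res X
  haveI hdepi := E.ses_epi hres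
  obtain ⟨P, d', b₁, sq, hd'⟩ := E.pullback_defl d i ⟨_, _, hres⟩
  obtain ⟨vt, hvtses, hvtb⟩ := E.ses_pullback hres sq hd'
  haveI hvtmono := E.ses_mono hvtses
  obtain ⟨r, hr⟩ := CP.ext_vanish hvtses hA hVX
  obtain ⟨s, hs⟩ := E.ses_section hvtses r hr
  obtain ⟨ρ, hρ⟩ := E.ses_lift hvtses (𝟙 P - d' ≫ s)
    (by rw [Preadditive.sub_comp, Category.id_comp, Category.assoc, hs, Category.comp_id,
      sub_self])
  have hvtρ : vt ≫ ρ = 𝟙 VX := by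
    rw [← cancel_mono vt, Category.id_comp, Category.assoc, hρ, Preadditive.comp_sub,
      Category.comp_id, ← Category.assoc, E.comp_zero hvtses, zero_comp, sub_zero]
  have hsρ : s ≫ ρ = 0 := by
    rw [← cancel_mono vt, zero_comp, Category.assoc, hρ, Preadditive.comp_sub,
      Category.comp_id, ← Category.assoc, hs, Category.id_comp, sub_self]
  -- `b₁` is an inflation with cokernel `d ≫ p`
  obtain ⟨K, k, hK⟩ := E.defl_comp d p ⟨_, _, hres⟩ ⟨_, _, hses⟩
  haveI hkmono := E.ses_mono hK
  obtain ⟨t, ht⟩ := E.ses_lift hses (k ≫ d)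
    (by rw [Category.assoc]; exact E.comp_zero hK)
  set φ : K ⟶ P := sq.lift t k ht with hφdef
  have hφd' : φ ≫ d' = t := sq.lift_fst _ _ _
  have hφb₁ : φ ≫ b₁ = k := sq.lift_snd _ _ _
  have hb₁dp : b₁ ≫ d ≫ p = 0 := by
    rw [← Category.assoc, ← sq.w, Category.assoc, E.comp_zero hses, comp_zero]
  obtain ⟨ψ, hψ⟩ := E.ses_lift hK b₁ hb₁dp
  have hφψ : φ ≫ ψ = 𝟙 K := by
    rw [← cancel_mono k, Category.id_comp, Category.assoc, hψ, hφb₁]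
  have hψφ : ψ ≫ φ = 𝟙 P := by
    apply sq.hom_ext
    · rw [Category.id_comp, Category.assoc, hφd', ← cancel_mono i, Category.assoc, ht,
        ← Category.assoc, hψ, sq.w]
    · rw [Category.id_comp, Category.assoc, hφb₁, hψ]
  have hb₁ses : E.IsSES b₁ (d ≫ p) := by
    have := E.ses_iso_congr (⟨ψ, φ, hψφ, hφψ⟩ : P ≅ K) (Iso.refl UX) (Iso.refl B) hK
    simpa [hψ] using this
  -- pushout of `b₁` along `ρ`
  obtain ⟨Q, f', b', sqpo, hf'⟩ := E.pushout_infl b₁ ρ ⟨_, _, hb₁ses⟩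
  have hdQcomm : ρ ≫ (0 : VX ⟶ B) = b₁ ≫ (d ≫ p) := by rw [comp_zero, hb₁dp]
  set dQ : Q ⟶ B := sqpo.desc 0 (d ≫ p) hdQcomm with hdQdef
  have hf'dQ : f' ≫ dQ = 0 := sqpo.inl_desc _ _ _
  have hb'dQ : b' ≫ dQ = d ≫ p := sqpo.inr_desc _ _ _
  have hvb' : v ≫ b' = f' := by
    rw [← hvtb, Category.assoc, ← sqpo.w, ← Category.assoc, hvtρ, Category.id_comp]
  have hlamb : (s ≫ b₁) ≫ b' = 0 := by
    rw [Category.assoc, ← sqpo.w, ← Category.assoc, hsρ, zero_comp]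
  have hlamd : (s ≫ b₁) ≫ d = i := by
    rw [Category.assoc, ← sq.w, ← Category.assoc, hs, Category.id_comp]
  obtain ⟨ZQ, gQ, hgQ⟩ := hf'
  have hdQepi : Epi dQ := by
    have : Epi (d ≫ p) := epi_comp d p
    exact epi_of_epi_fac hb'dQ
  have hQses : E.IsSES f' dQ := by
    apply E.ses_coker_congr hgQ dQ hf'dQ hdQepi
    intro T tt htt
    obtain ⟨τ', hτ'⟩ := E.ses_desc hres (b' ≫ tt)
      (by rw [← Category.assoc, hvb', htt])
    have hiτ' : i ≫ τ' = 0 := by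
      rw [← hlamd, Category.assoc, hτ', ← Category.assoc, hlamb, zero_comp]
    obtain ⟨τ, hτ⟩ := E.ses_desc hses τ' hiτ'
    refine ⟨τ, ?_⟩
    apply sqpo.hom_ext
    · rw [← Category.assoc, hf'dQ, zero_comp, htt]
    · rw [← Category.assoc, hb'dQ, Category.assoc, hτ, hτ']
  -- split `(f', dQ)` and pull back along `p`
  obtain ⟨rQ, hrQ⟩ := CP.ext_vanish hQses hB hVX
  obtain ⟨σ, hσ⟩ := E.ses_section hQses rQ hrQ
  obtain ⟨P'', db, bP, sq2, hker2⟩ := E.pullback_defl dQ p ⟨_, _, hQses⟩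
  obtain ⟨μ, hμses, hμbP⟩ := E.ses_pullback hQses sq2 hker2
  haveI hμmono := E.ses_mono hμses
  set χ : UX ⟶ P'' := sq2.lift d b' hb'dQ.symm with hχdef
  have hχdb : χ ≫ db = d := sq2.lift_fst _ _ _
  have hχbP : χ ≫ bP = b' := sq2.lift_snd _ _ _
  have hvχ : v ≫ χ = μ := by
    apply sq2.hom_ext
    · rw [Category.assoc, hχdb, E.comp_zero hres, E.comp_zero hμses]
    · rw [Category.assoc, hχbP, hvb', hμbP]
  have hctcomm : (𝟙 X) ≫ p = (p ≫ σ) ≫ dQ := by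
    rw [Category.id_comp, Category.assoc, hσ, Category.comp_id]
  set ct : X ⟶ P'' := sq2.lift (𝟙 X) (p ≫ σ) hctcomm with hctdef
  have hctdb : ct ≫ db = 𝟙 X := sq2.lift_fst _ _ _
  obtain ⟨l, hl⟩ := E.ses_lift hμses (𝟙 P'' - db ≫ ct)
    (by rw [Preadditive.sub_comp, Category.id_comp, Category.assoc, hctdb, Category.comp_id,
      sub_self])
  have hμl : μ ≫ l = 𝟙 VX := by
    rw [← cancel_mono μ, Category.id_comp, Category.assoc, hl, Preadditive.comp_sub,
      Category.comp_id, ← Category.assoc, E.comp_zero hμses, zero_comp, sub_zero]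
  have hvr : v ≫ (χ ≫ l) = 𝟙 VX := by rw [← Category.assoc, hvχ, hμl]
  obtain ⟨ς, hς⟩ := E.ses_section hres (χ ≫ l) hvr
  exact CP.U_summand hUX ⟨ς, d, hς⟩

end CotorsionPair

end AuxLemmas2


section AuxLemmas3

variable {E : ExactStructure C}

lemma btminus_mem_Bminus (CP₁ CP₂ : CotorsionPair E) (htwin : CP₁.U ⊆ CP₂.U) {A : C}
    (hA : A ∈ Btminus E CP₁ CP₂) : A ∈ CP₂.Bminus := by
  obtain ⟨WA, UA, i, qA, hWA, hUA, hses⟩ := hA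
  obtain ⟨V'', U'', cA, d'', hV'', hU'', hses2⟩ := CP₂.cores WA
  haveI := E.ses_mono hses
  haveI := E.ses_mono hses2
  haveI hqAepi := E.ses_epi hses
  obtain ⟨Y', πA, hY'ses⟩ := E.infl_comp i cA ⟨_, _, hses⟩ ⟨_, _, hses2⟩
  haveI hπAepi := E.ses_epi hY'ses
  obtain ⟨P, f', b, sqpo, hf'⟩ := E.pushout_infl cA qA ⟨_, _, hses2⟩
  have hgcomm : qA ≫ (0 : UA ⟶ U'') = cA ≫ d'' := by rw [comp_zero, E.comp_zero hses2]
  set g : P ⟶ U'' := sqpo.desc 0 d'' hgcomm with hgdef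
  have hf'g : f' ≫ g = 0 := sqpo.inl_desc _ _ _
  have hbg : b ≫ g = d'' := sqpo.inr_desc _ _ _
  haveI hd''epi := E.ses_epi hses2
  have hgepi : Epi g := epi_of_epi_fac hbg
  obtain ⟨Z₀, g₀, hg₀⟩ := hf'
  have hPses : E.IsSES f' g := by
    apply E.ses_coker_congr hg₀ g hf'g hgepi
    intro T tt htt
    obtain ⟨τ₁, hτ₁⟩ := E.ses_desc hses2 (b ≫ tt)
      (by rw [← Category.assoc, ← sqpo.w, Category.assoc, htt, comp_zero])
    refine ⟨τ₁, ?_⟩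
    apply sqpo.hom_ext
    · rw [← Category.assoc, hf'g, zero_comp, htt]
    · rw [← Category.assoc, hbg, hτ₁]
  have hPU : P ∈ CP₂.U := CP₂.mem_U_of_ext hPses (htwin hUA) hU''
  have hV''U : V'' ∈ CP₂.U := CP₂.mem_U_of_ext hses2 hWA.2 hU''
  have hicb : (i ≫ cA) ≫ b = 0 := by
    rw [Category.assoc, ← sqpo.w, ← Category.assoc, E.comp_zero hses, zero_comp]
  obtain ⟨ι, hι⟩ := E.ses_desc hY'ses b hicb
  have hbepi : ∀ {T : C} (x y : P ⟶ T), b ≫ x = b ≫ y → x = y := by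
    intro T x y hxy
    apply sqpo.hom_ext ?_ hxy
    rw [← cancel_epi qA, ← Category.assoc, ← Category.assoc, sqpo.w,
      Category.assoc, Category.assoc, hxy]
  obtain ⟨τ₁, hτ₁⟩ := E.ses_desc hses (cA ≫ πA)
    (by rw [← Category.assoc]; exact E.comp_zero hY'ses)
  set ι' : P ⟶ Y' := sqpo.desc τ₁ πA hτ₁ with hι'def
  have hbι' : b ≫ ι' = πA := sqpo.inr_desc _ _ _
  have hιι' : ι ≫ ι' = 𝟙 Y' := by
    rw [← cancel_epi πA, ← Category.assoc, hι, hbι', Category.comp_id]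
  have hY'U : Y' ∈ CP₂.U := CP₂.U_summand hPU ⟨ι, ι', hιι'⟩
  exact ⟨V'', Y', i ≫ cA, πA, ⟨hV''U, hV''⟩, hY'U, hY'ses⟩

lemma btplus_detector (CP₁ CP₂ : CotorsionPair E) {B : C} (hB : B ∈ Btplus E CP₁ CP₂) :
    ∃ (WB : C), WB ∈ Wt E CP₁ CP₂ ∧ ∃ (p : WB ⟶ B) (Y₁ : C), Y₁ ∈ CP₂.Bplus ∧
      ∃ (j₁ : B ⟶ Y₁), ∀ {A : C} (h : A ⟶ B),
        FactorsThru CP₂.W (h ≫ j₁) → ∃ u : A ⟶ WB, u ≫ p = h := by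
  obtain ⟨V, WB, v, p, hV, hWB, hses⟩ := hB
  haveI hpepi := E.ses_epi hses
  obtain ⟨V', U', c, ec, hV', hU', hses2⟩ := CP₂.cores WB
  haveI hcmono := E.ses_mono hses2
  obtain ⟨Y₁, π₁, hY₁ses⟩ := E.infl_comp v c ⟨_, _, hses⟩ ⟨_, _, hses2⟩
  obtain ⟨j₁, hj₁⟩ := E.ses_desc hses (c ≫ π₁)
    (by rw [← Category.assoc]; exact E.comp_zero hY₁ses)
  obtain ⟨e, he⟩ := E.ses_desc hY₁ses ec
    (by rw [Category.assoc, E.comp_zero hses2, comp_zero])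
  have hje : j₁ ≫ e = 0 := by
    rw [← cancel_epi p, ← Category.assoc, hj₁, Category.assoc, he,
      E.comp_zero hses2, comp_zero]
  have hjcancel : ∀ {T : C} (x : T ⟶ B), x ≫ j₁ = 0 → x = 0 := by
    intro T x hx
    obtain ⟨T', p', y, sqT, hp'⟩ := E.pullback_defl p x ⟨_, _, hses⟩
    obtain ⟨z, hz⟩ := E.ses_lift hY₁ses (y ≫ c)
      (by rw [Category.assoc, ← hj₁, ← Category.assoc, ← sqT.w, Category.assoc, hx, comp_zero])
    have hyzv : z ≫ v = y := by
      rw [← cancel_mono c, Category.assoc]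
      exact hz
    obtain ⟨Z', f₀, hp'ses⟩ := hp'
    haveI hp'epi := E.ses_epi hp'ses
    have hpx : p' ≫ x = 0 := by
      rw [sqT.w, ← hyzv, Category.assoc, E.comp_zero hses, comp_zero]
    rw [← cancel_epi p', comp_zero]
    exact hpx
  have hY₁mem : Y₁ ∈ CP₂.Bplus :=
    ⟨V, V', v ≫ c, π₁, hV, ⟨CP₂.mem_U_of_ext hses2 hWB.2 hU', hV'⟩, hY₁ses⟩
  refine ⟨WB, hWB, p, Y₁, hY₁mem, j₁, ?_⟩
  intro A h hfac
  obtain ⟨W₂, α, β, hW₂, hαβ⟩ := hfac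
  obtain ⟨Qb, g', bq, sqb, hg'⟩ := E.pullback_defl π₁ β ⟨_, _, hY₁ses⟩
  obtain ⟨vtb, hvtbses, _⟩ := E.ses_pullback hY₁ses sqb hg'
  obtain ⟨rb, hrb⟩ := CP₂.ext_vanish hvtbses hW₂.1 hV
  obtain ⟨s₁, hs₁⟩ := E.ses_section hvtbses rb hrb
  have hlam : (s₁ ≫ bq) ≫ π₁ = β := by
    rw [Category.assoc, ← sqb.w, ← Category.assoc, hs₁, Category.id_comp]
  have ht₁ec : (α ≫ (s₁ ≫ bq)) ≫ ec = 0 := by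
    rw [← he, ← Category.assoc, Category.assoc α, hlam, hαβ, Category.assoc, hje, comp_zero]
  obtain ⟨u, hu⟩ := E.ses_lift hses2 (α ≫ (s₁ ≫ bq)) ht₁ec
  refine ⟨u, ?_⟩
  have hz : (u ≫ p - h) ≫ j₁ = 0 := by
    rw [Preadditive.sub_comp, Category.assoc, hj₁, ← Category.assoc, hu,
      Category.assoc, hlam, hαβ, sub_self]
  exact sub_eq_zero.mp (hjcancel _ hz)

end AuxLemmas3


section AuxLemmas4

variable {E : ExactStructure C}

lemma CotorsionPair.zero_mem_Bplus (CP : CotorsionPair E) : (0 : C) ∈ CP.Bplus :=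
  ⟨0, 0, 𝟙 0, 0, CP.zero_mem_V, CP.zero_mem_W, E.id_ses 0⟩

lemma CotorsionPair.zero_mem_Bminus (CP : CotorsionPair E) : (0 : C) ∈ CP.Bminus :=
  ⟨0, 0, 0, 𝟙 0, CP.zero_mem_W, CP.zero_mem_U, E.id_ses' 0⟩

lemma main_q (CP₁ CP₂ : CotorsionPair E)
    (σp₂ : CP₂.QW ⥤ CP₂.BplusCat) (adj₃ : σp₂ ⊣ CP₂.inclPlus)
    (σm₂ : CP₂.QW ⥤ CP₂.BminusCat) (adj₄ : CP₂.inclMinus ⊣ σm₂)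
    (H₂ : C ⥤ CP₂.HeartCat)
    (hH₂ : H₂ ⋙ CP₂.inclHeart =
      CP₂.qf ⋙ σp₂ ⋙ CP₂.inclPlus ⋙ σm₂ ⋙ CP₂.inclMinus)
    {A B : C} (hAm : A ∈ CP₂.Bminus) {Y₁ : C} (hY₁ : Y₁ ∈ CP₂.Bplus) (j₁ : B ⟶ Y₁)
    {f g : A ⟶ B} (hfg : H₂.map f = H₂.map g) :
    CP₂.qf.map (f ≫ j₁) = CP₂.qf.map (g ≫ j₁) := by
  have hR : (CP₂.qf ⋙ σp₂ ⋙ CP₂.inclPlus ⋙ σm₂ ⋙ CP₂.inclMinus).map f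
      = (CP₂.qf ⋙ σp₂ ⋙ CP₂.inclPlus ⋙ σm₂ ⋙ CP₂.inclMinus).map g := by
    have h1 := Functor.congr_hom hH₂ f
    have h2 := Functor.congr_hom hH₂ g
    rw [Functor.comp_map] at h1 h2
    rw [hfg] at h1
    have h3 := h1.symm.trans h2
    rw [cancel_epi, cancel_mono] at h3
    exact h3
  have hAhat : (CP₂.qf.obj A).as ∈ CP₂.Bminus := hAm
  have hYhat : (CP₂.qf.obj Y₁).as ∈ CP₂.Bplus := hY₁
  -- unit naturality
  have hunit : ∀ h : A ⟶ B, CP₂.qf.map h ≫ adj₃.unit.app (CP₂.qf.obj B)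
      = adj₃.unit.app (CP₂.qf.obj A) ≫ (σp₂ ⋙ CP₂.inclPlus).map (CP₂.qf.map h) := by
    intro h
    have := adj₃.unit.naturality (CP₂.qf.map h)
    simpa using this
  -- the unit at A factors through the counit of the coreflection
  obtain ⟨w, hw⟩ : ∃ w : (⟨CP₂.qf.obj A, hAhat⟩ : CP₂.BminusCat) ⟶
        σm₂.obj ((σp₂ ⋙ CP₂.inclPlus).obj (CP₂.qf.obj A)),
      CP₂.inclMinus.map w ≫ adj₄.counit.app ((σp₂ ⋙ CP₂.inclPlus).obj (CP₂.qf.obj A))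
        = adj₃.unit.app (CP₂.qf.obj A) := by
    refine ⟨adj₄.homEquiv _ _ (adj₃.unit.app (CP₂.qf.obj A)), ?_⟩
    have hcu := adj₄.homEquiv_counit
      (X := (⟨CP₂.qf.obj A, hAhat⟩ : CP₂.BminusCat))
      (Y := (σp₂ ⋙ CP₂.inclPlus).obj (CP₂.qf.obj A))
      (g := adj₄.homEquiv _ _ (adj₃.unit.app (CP₂.qf.obj A)))
    rw [Equiv.symm_apply_apply] at hcu
    exact hcu.symm
  -- counit naturality
  have hcnat : ∀ (u : (σp₂ ⋙ CP₂.inclPlus).obj (CP₂.qf.obj A)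
        ⟶ (σp₂ ⋙ CP₂.inclPlus).obj (CP₂.qf.obj B)),
      adj₄.counit.app ((σp₂ ⋙ CP₂.inclPlus).obj (CP₂.qf.obj A)) ≫ u
      = CP₂.inclMinus.map (σm₂.map u)
          ≫ adj₄.counit.app ((σp₂ ⋙ CP₂.inclPlus).obj (CP₂.qf.obj B)) := by
    intro u
    have := adj₄.counit.naturality u
    simpa using this.symm
  have hfg2 : CP₂.qf.map f ≫ adj₃.unit.app (CP₂.qf.obj B)
      = CP₂.qf.map g ≫ adj₃.unit.app (CP₂.qf.obj B) := by
    have kf := hunit f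
    have kg := hunit g
    rw [← hw, Category.assoc, hcnat ((σp₂ ⋙ CP₂.inclPlus).map (CP₂.qf.map f))] at kf
    rw [← hw, Category.assoc, hcnat ((σp₂ ⋙ CP₂.inclPlus).map (CP₂.qf.map g))] at kg
    rw [kf, kg]
    have heq : CP₂.inclMinus.map (σm₂.map ((σp₂ ⋙ CP₂.inclPlus).map (CP₂.qf.map f)))
        = CP₂.inclMinus.map (σm₂.map ((σp₂ ⋙ CP₂.inclPlus).map (CP₂.qf.map g))) := hR
    rw [heq]
  -- factor `π j₁` through the unit at B
  have hj : CP₂.qf.map j₁ = adj₃.unit.app (CP₂.qf.obj B)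
      ≫ CP₂.inclPlus.map
        ((adj₃.homEquiv (CP₂.qf.obj B) ⟨CP₂.qf.obj Y₁, hYhat⟩).symm (CP₂.qf.map j₁)) := by
    have := adj₃.homEquiv_unit
      (X := CP₂.qf.obj B) (Y := (⟨CP₂.qf.obj Y₁, hYhat⟩ : CP₂.BplusCat))
      (f := (adj₃.homEquiv (CP₂.qf.obj B) ⟨CP₂.qf.obj Y₁, hYhat⟩).symm (CP₂.qf.map j₁))
    rw [Equiv.apply_symm_apply] at this
    exact this
  rw [CP₂.qf.map_comp, CP₂.qf.map_comp, hj, ← Category.assoc, ← Category.assoc, hfg2]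

lemma H₂_map_zero (CP₁ CP₂ : CotorsionPair E)
    (σp₂ : CP₂.QW ⥤ CP₂.BplusCat) (adj₃ : σp₂ ⊣ CP₂.inclPlus)
    (σm₂ : CP₂.QW ⥤ CP₂.BminusCat) (adj₄ : CP₂.inclMinus ⊣ σm₂)
    (H₂ : C ⥤ CP₂.HeartCat)
    (hH₂ : H₂ ⋙ CP₂.inclHeart =
      CP₂.qf ⋙ σp₂ ⋙ CP₂.inclPlus ⋙ σm₂ ⋙ CP₂.inclMinus)
    [Abelian CP₂.HeartCat] (A B : C) : H₂.map (0 : A ⟶ B) = 0 := by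
  have hπ0 : ∀ u v : CP₂.qf.obj (0 : C) ⟶ CP₂.qf.obj (0 : C), u = v := by
    intro u v
    obtain ⟨u₀, rfl⟩ := CP₂.qf.map_surjective u
    obtain ⟨v₀, rfl⟩ := CP₂.qf.map_surjective v
    rw [(isZero_zero C).eq_of_src u₀ v₀]
  have hsub : ∀ u v : H₂.obj (0 : C) ⟶ H₂.obj (0 : C), u = v := by
    have e2 : CP₂.inclPlus.obj (σp₂.obj (CP₂.qf.obj (0 : C))) ≅ CP₂.qf.obj (0 : C) :=
      CP₂.inclPlus.mapIso
        (asIso (adj₃.counit.app ⟨CP₂.qf.obj (0 : C), CP₂.zero_mem_Bplus⟩))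
    have e3 : (σm₂ ⋙ CP₂.inclMinus).obj (CP₂.inclPlus.obj (σp₂.obj (CP₂.qf.obj (0 : C))))
        ≅ (σm₂ ⋙ CP₂.inclMinus).obj (CP₂.qf.obj (0 : C)) := (σm₂ ⋙ CP₂.inclMinus).mapIso e2
    have e5 : (σm₂ ⋙ CP₂.inclMinus).obj (CP₂.qf.obj (0 : C)) ≅ CP₂.qf.obj (0 : C) :=
      CP₂.inclMinus.mapIso
        (asIso (adj₄.unit.app ⟨CP₂.qf.obj (0 : C), CP₂.zero_mem_Bminus⟩)).symm
    have e0 : CP₂.inclHeart.obj (H₂.obj (0 : C))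
        = (σm₂ ⋙ CP₂.inclMinus).obj (CP₂.inclPlus.obj (σp₂.obj (CP₂.qf.obj (0 : C)))) :=
      Functor.congr_obj hH₂ (0 : C)
    let e : CP₂.inclHeart.obj (H₂.obj (0 : C)) ≅ CP₂.qf.obj (0 : C) :=
      eqToIso e0 ≪≫ e3 ≪≫ e5
    intro u v
    apply CP₂.inclHeart.map_injective
    have h1 := hπ0 (e.inv ≫ CP₂.inclHeart.map u ≫ e.hom)
      (e.inv ≫ CP₂.inclHeart.map v ≫ e.hom)
    have h2 := congrArg (fun z => e.hom ≫ z ≫ e.inv) h1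
    simpa using h2
  have hid : (𝟙 (H₂.obj (0 : C)) : _) = 0 := hsub _ _
  have h0 : (0 : A ⟶ B) = (0 : A ⟶ (0 : C)) ≫ (0 : (0 : C) ⟶ B) := by simp
  rw [h0, H₂.map_comp, ← Category.id_comp (H₂.map (0 : (0 : C) ⟶ B)), hid, zero_comp,
    comp_zero]

lemma main_factor (CP₁ CP₂ : CotorsionPair E) (htwin : CP₁.U ⊆ CP₂.U)
    (σp₂ : CP₂.QW ⥤ CP₂.BplusCat) (adj₃ : σp₂ ⊣ CP₂.inclPlus)
    (σm₂ : CP₂.QW ⥤ CP₂.BminusCat) (adj₄ : CP₂.inclMinus ⊣ σm₂)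
    (H₂ : C ⥤ CP₂.HeartCat)
    (hH₂ : H₂ ⋙ CP₂.inclHeart =
      CP₂.qf ⋙ σp₂ ⋙ CP₂.inclPlus ⋙ σm₂ ⋙ CP₂.inclMinus)
    {A B : C} (hA : A ∈ Ht E CP₁ CP₂) (hB : B ∈ Ht E CP₁ CP₂) {f g : A ⟶ B}
    (hfg : H₂.map f = H₂.map g) : FactorsThru (Wt E CP₁ CP₂) (f - g) := by
  obtain ⟨WB, hWB, p, Y₁, hY₁, j₁, hdet⟩ := btplus_detector CP₁ CP₂ hB.1
  have hAm := btminus_mem_Bminus CP₁ CP₂ htwin hA.2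
  have hq := main_q CP₁ CP₂ σp₂ adj₃ σm₂ adj₄ H₂ hH₂ hAm hY₁ j₁ hfg
  have hrel : CP₂.wRel (f ≫ j₁) (g ≫ j₁) := (Quotient.functor_map_eq_iff _ _ _).mp hq
  obtain ⟨W₂, a, b, hW₂, hab⟩ := hrel
  obtain ⟨u, hu⟩ := hdet (f - g) ⟨W₂, a, b, hW₂, by rw [hab, Preadditive.sub_comp]⟩
  exact ⟨WB, u, p, hWB, hu⟩

end AuxLemmas4

/-- for a twin cotorsion pair and `f : A ⟶ B` with `A, B ∈ 𝓗_t`,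
`H₂(f) = 0` iff `f` factors through `𝒲_t`; consequently `β₂` is faithful. -/
theorem stmt18 (CP₁ CP₂ : CotorsionPair E) (htwin : CP₁.U ⊆ CP₂.U)
    (hEP : E.EnoughProj) (hEI : E.EnoughInj)
    (σp₂ : CP₂.QW ⥤ CP₂.BplusCat) (adj₃ : σp₂ ⊣ CP₂.inclPlus)
    (σm₂ : CP₂.QW ⥤ CP₂.BminusCat) (adj₄ : CP₂.inclMinus ⊣ σm₂)
    (H₂ : C ⥤ CP₂.HeartCat)
    (hH₂ : H₂ ⋙ CP₂.inclHeart =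
      CP₂.qf ⋙ σp₂ ⋙ CP₂.inclPlus ⋙ σm₂ ⋙ CP₂.inclMinus)
    [Abelian CP₂.HeartCat]
    (hresp : ∀ (x y : C) (f g : x ⟶ y), wtRel CP₁ CP₂ f g → H₂.map f = H₂.map g) :
    (∀ (A B : C), A ∈ Ht E CP₁ CP₂ → B ∈ Ht E CP₁ CP₂ → ∀ f : A ⟶ B,
      (H₂.map f = 0 ↔ FactorsThru (Wt E CP₁ CP₂) f)) ∧
    (beta2 CP₁ CP₂ H₂ hresp).Faithful := by
  have hzero : ∀ A B : C, H₂.map (0 : A ⟶ B) = 0 :=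
    H₂_map_zero CP₁ CP₂ σp₂ adj₃ σm₂ adj₄ H₂ hH₂
  constructor
  · intro A B hA hB f
    constructor
    · intro hf
      have := main_factor CP₁ CP₂ htwin σp₂ adj₃ σm₂ adj₄ H₂ hH₂ hA hB
        (f := f) (g := 0) (by rw [hf, hzero])
      simpa using this
    · rintro ⟨W, a, b, hW, hab⟩
      have hrel : wtRel CP₁ CP₂ f 0 := ⟨W, a, b, hW, by rw [sub_zero]; exact hab⟩
      rw [hresp _ _ f 0 hrel]
      exact hzero A B
  · constructor
    intro X Y φ ψ hβ
    obtain ⟨f, hf⟩ := (Quotient.functor (wtRel CP₁ CP₂)).map_surjective φ.hom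
    obtain ⟨g, hg⟩ := (Quotient.functor (wtRel CP₁ CP₂)).map_surjective ψ.hom
    have hfg : H₂.map f = H₂.map g := by
      have h1 : (beta2 CP₁ CP₂ H₂ hresp).map φ = H₂.map f := by
        show (CategoryTheory.Quotient.lift (wtRel CP₁ CP₂) H₂ hresp).map φ.hom = _
        rw [← hf]; exact Quotient.lift_map_functor_map (wtRel CP₁ CP₂) H₂ hresp f
      have h2 : (beta2 CP₁ CP₂ H₂ hresp).map ψ = H₂.map g := by
        show (CategoryTheory.Quotient.lift (wtRel CP₁ CP₂) H₂ hresp).map ψ.hom = _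
        rw [← hg]; exact Quotient.lift_map_functor_map (wtRel CP₁ CP₂) H₂ hresp g
      rw [← h1, ← h2, hβ]
    have hfac := main_factor CP₁ CP₂ htwin σp₂ adj₃ σm₂ adj₄ H₂ hH₂
      X.property Y.property hfg
    apply ObjectProperty.hom_ext
    rw [← hf, ← hg]
    exact CategoryTheory.Quotient.sound _ hfac
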